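/- Let n ≥ 1 be a natural number and equip E = (Fin n → ℂ) with the supremum norm. Let γ be a nonzero real number, define F : E → E by (F x)(i) = −γ·|x i|²·(x i), let A : E ≃L E be a continuous linear equivalence (with inverse A⁻¹), let s ≥ 0 and M ≥ 0 be real numbers, and let G : E → E satisfy ‖G φ‖ ≤ M + (|γ| / (2‖A‖·‖A⁻¹‖))·‖φ‖³ for all φ ∈ E. Then there exists R > 0 such that for every φ ∈ E with ‖φ‖ = R, one has ‖A⁻¹(G φ − s·φ)‖ < ‖φ − A⁻¹(F φ)‖. -/

import Mathlib

set_option maxHeartbeats 1600000 in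
/-- Key homotopy estimate: if G has the subcubic-type bound
‖G φ‖ ≤ M + (|γ|/(2‖A‖‖A⁻¹‖))‖φ‖³, then there is a radius R > 0 such that on the
sphere ‖φ‖ = R one has ‖A⁻¹(G φ − s φ)‖ < ‖φ − A⁻¹(F φ)‖, where
(F φ)(i) = −γ|φ i|²(φ i). -/
theorem homotopy_estimate (n : ℕ) (hn : 1 ≤ n) (γ : ℝ) (hγ : γ ≠ 0)
    (A : (Fin n → ℂ) ≃L[ℂ] (Fin n → ℂ)) (s M : ℝ) (hs : 0 ≤ s) (hM : 0 ≤ M)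
    (G : (Fin n → ℂ) → (Fin n → ℂ))
    (hG : ∀ φ : Fin n → ℂ, ‖G φ‖ ≤ M +
      (|γ| / (2 * ‖(A : (Fin n → ℂ) →L[ℂ] (Fin n → ℂ))‖ *
        ‖(A.symm : (Fin n → ℂ) →L[ℂ] (Fin n → ℂ))‖)) * ‖φ‖ ^ 3) :
    ∃ R > (0 : ℝ), ∀ φ : Fin n → ℂ, ‖φ‖ = R →
      ‖A.symm (G φ - s • φ)‖ <
        ‖φ - A.symm (fun i : Fin n => (-γ * ‖φ i‖ ^ 2 : ℝ) • φ i)‖ := by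
  haveI : NeZero n := ⟨by omega⟩
  set a := ‖(A : (Fin n → ℂ) →L[ℂ] (Fin n → ℂ))‖ with ha
  set b := ‖(A.symm : (Fin n → ℂ) →L[ℂ] (Fin n → ℂ))‖ with hb
  -- positivity of a and b
  obtain ⟨x, hx⟩ : ∃ x : Fin n → ℂ, x ≠ 0 := ⟨fun _ => 1, by
    intro h; have := congrFun h 0; simp at this⟩
  have hxpos : 0 < ‖x‖ := norm_pos_iff.mpr hx
  have hab1 : ‖x‖ ≤ b * (a * ‖x‖) := by
    calc ‖x‖ = ‖A.symm (A x)‖ := by simp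
    _ ≤ b * ‖A x‖ := (A.symm : (Fin n → ℂ) →L[ℂ] (Fin n → ℂ)).le_opNorm _
    _ ≤ b * (a * ‖x‖) := mul_le_mul_of_nonneg_left
        ((A : (Fin n → ℂ) →L[ℂ] (Fin n → ℂ)).le_opNorm _) (norm_nonneg _)
  have hapos : 0 < a := by
    by_contra h
    push_neg at h
    have ha0 : a = 0 := le_antisymm h (norm_nonneg _)
    rw [ha0] at hab1; simp at hab1; exact hx hab1
  have hbpos : 0 < b := by
    by_contra h
    push_neg at h
    have hb0 : b = 0 := le_antisymm h (norm_nonneg _)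
    rw [hb0] at hab1; simp at hab1; exact hx hab1
  have hγpos : 0 < |γ| := abs_pos.mpr hγ
  set c := |γ| / (2 * a) with hc
  have hcpos : 0 < c := by positivity
  set K := 1 + b * s + b * M with hK
  have hKpos : 0 < K := by positivity
  refine ⟨max 1 (Real.sqrt ((K + 1) / c)), lt_of_lt_of_le one_pos (le_max_left _ _), ?_⟩
  intro φ hφ
  set R := max 1 (Real.sqrt ((K + 1) / c)) with hR
  have hR1 : 1 ≤ R := le_max_left _ _
  have hRpos : 0 < R := lt_of_lt_of_le one_pos hR1
  have hR2 : K + 1 ≤ c * R ^ 2 := by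
    have h1 : Real.sqrt ((K + 1) / c) ≤ R := le_max_right _ _
    have h2 : (K + 1) / c ≤ R ^ 2 := by
      have := Real.sq_sqrt (by positivity : (0:ℝ) ≤ (K + 1) / c)
      nlinarith [Real.sqrt_nonneg ((K + 1) / c)]
    calc K + 1 = c * ((K + 1) / c) := by field_simp
    _ ≤ c * R ^ 2 := by gcongr
  -- lower bound on ‖F φ‖
  set Fφ : Fin n → ℂ := fun i : Fin n => (-γ * ‖φ i‖ ^ 2 : ℝ) • φ i with hFφ
  obtain ⟨i₀, _, hi₀⟩ := Finset.exists_mem_eq_sup (Finset.univ : Finset (Fin n))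
    Finset.univ_nonempty (fun i => ‖φ i‖₊)
  have hφi₀ : ‖φ i₀‖ = R := by
    rw [← hφ, Pi.norm_def, hi₀]; rfl
  have hFlow : |γ| * R ^ 3 ≤ ‖Fφ‖ := by
    have h1 : ‖Fφ i₀‖ ≤ ‖Fφ‖ := norm_le_pi_norm Fφ i₀
    have h2 : ‖Fφ i₀‖ = |γ| * R ^ 3 := by
      simp only [hFφ, norm_smul, Real.norm_eq_abs]
      rw [abs_mul, abs_neg, abs_sq]
      rw [hφi₀]
      ring
    linarith
  -- lower bound on ‖A.symm Fφ‖
  have hAsF : |γ| * R ^ 3 / a ≤ ‖A.symm Fφ‖ := by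
    rw [div_le_iff₀ hapos] at *
    calc |γ| * R ^ 3 ≤ ‖Fφ‖ := hFlow
    _ = ‖A (A.symm Fφ)‖ := by simp
    _ ≤ a * ‖A.symm Fφ‖ := (A : (Fin n → ℂ) →L[ℂ] (Fin n → ℂ)).le_opNorm _
    _ = ‖A.symm Fφ‖ * a := mul_comm _ _
  -- upper bound on LHS
  have hL : ‖A.symm (G φ - s • φ)‖ ≤ b * M + c * R ^ 3 + b * s * R := by
    calc ‖A.symm (G φ - s • φ)‖
        ≤ b * ‖G φ - s • φ‖ := (A.symm : (Fin n → ℂ) →L[ℂ] (Fin n → ℂ)).le_opNorm _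
    _ ≤ b * (‖G φ‖ + ‖s • φ‖) := by gcongr; exact norm_sub_le _ _
    _ = b * ‖G φ‖ + b * (s * R) := by
        rw [norm_smul, Real.norm_eq_abs, abs_of_nonneg hs, hφ]; ring
    _ ≤ b * (M + (|γ| / (2 * a * b)) * R ^ 3) + b * (s * R) := by
        gcongr
        have := hG φ
        rw [hφ] at this
        exact this
    _ = b * M + (b * (|γ| / (2 * a * b))) * R ^ 3 + b * s * R := by ring
    _ = b * M + c * R ^ 3 + b * s * R := by
        rw [hc]
        congr 1
        congr 1
        congr 1
        field_simp
  -- lower bound on RHS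
  have hRHS : |γ| * R ^ 3 / a - R ≤ ‖φ - A.symm Fφ‖ := by
    calc |γ| * R ^ 3 / a - R ≤ ‖A.symm Fφ‖ - ‖φ‖ := by rw [hφ]; linarith
    _ ≤ ‖φ - A.symm Fφ‖ := by
        rw [norm_sub_rev]; exact norm_sub_norm_le _ _
  -- combine
  clear_value a b c K R Fφ
  have key : b * M + c * R ^ 3 + b * s * R < |γ| * R ^ 3 / a - R := by
    have h2c : |γ| / a = 2 * c := by rw [hc]; field_simp
    have heq : |γ| * R ^ 3 / a = 2 * c * R ^ 3 := by
      rw [mul_comm |γ| (R^3), mul_div_assoc, h2c]; ring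
    rw [heq]
    clear heq h2c hG hFlow hAsF hL hRHS hab1 hφ hFφ hφi₀ hi₀ hx hxpos hc hR hγ hγpos
    have hR3 : K * R + R ≤ c * R ^ 3 := by
      have h1 := mul_le_mul_of_nonneg_right hR2 hRpos.le
      nlinarith
    have h4 : b * M ≤ b * M * R := by
      nlinarith [mul_le_mul_of_nonneg_left hR1 (mul_nonneg hbpos.le hM)]
    have hR3' : R + b * s * R + b * M * R + R ≤ c * R ^ 3 := by
      rw [hK] at hR3; linarith [hR3]
    linarith
  linarith
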